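/- arXiv:1011.5785 — 4 statements merged into one kernel-verified Lean document; each statement's English description precedes it below -/
import Mathlib

section
/- Let p be a prime. Every closed additive subgroup of the ring ℤ_p of p-adic integers is either the trivial subgroup {0} or equal to p^nℤ_p for some natural number n ≥ 0. In particular every nontrivial closed additive subgroup of ℤ_p is open. -/
/-- The additive subgroup `p^n ℤ_p = {p^n • x : x ∈ ℤ_p}` of the `p`-adic integers. -/
noncomputable def pPowSubgroup (p : ℕ) [Fact p.Prime] (n : ℕ) : AddSubgroup ℤ_[p] :=
  (AddMonoidHom.mulLeft ((p : ℤ_[p]) ^ n)).range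

lemma mem_pPowSubgroup_iff (p : ℕ) [Fact p.Prime] (n : ℕ) (y : ℤ_[p]) :
    y ∈ pPowSubgroup p n ↔ ‖y‖ ≤ (p : ℝ) ^ (-(n : ℤ)) := by
  rw [PadicInt.norm_le_pow_iff_mem_span_pow, Ideal.mem_span_singleton]
  constructor
  · rintro ⟨z, rfl⟩; exact Dvd.intro z rfl
  · rintro ⟨z, rfl⟩; exact ⟨z, rfl⟩

/-- Every closed additive subgroup of `ℤ_p` is trivial or of the form `p^n ℤ_p`;
in particular every nontrivial closed additive subgroup is open. -/
theorem closed_addSubgroup_classification (p : ℕ) [Fact p.Prime]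
    (H : AddSubgroup ℤ_[p]) (hH : IsClosed (H : Set ℤ_[p])) :
    (H = ⊥ ∨ ∃ n : ℕ, H = pPowSubgroup p n) ∧ (H ≠ ⊥ → IsOpen (H : Set ℤ_[p])) := by
  by_cases hbot : H = ⊥
  · exact ⟨Or.inl hbot, fun h => absurd hbot h⟩
  have hp1 : (1 : ℝ) ≤ (p : ℝ) := by
    exact_mod_cast Nat.one_le_iff_ne_zero.mpr (Fact.out : p.Prime).pos.ne'
  obtain ⟨x, hxH, hx0⟩ : ∃ x ∈ H, x ≠ 0 := by
    by_contra h
    push_neg at h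
    apply hbot
    ext y
    simp only [AddSubgroup.mem_bot]
    exact ⟨fun hy => h y hy, fun hy => hy ▸ H.zero_mem⟩
  set S : Set ℕ := {n | ∃ x ∈ H, x ≠ 0 ∧ x.valuation = (n : ℤ)} with hSdef
  have hS : S.Nonempty :=
    ⟨x.valuation, x, hxH, hx0, rfl⟩
  set n := sInf S with hn
  obtain ⟨a, haH, ha0, hav⟩ := Nat.sInf_mem hS
  -- key : all ℤ_p-multiples of a lie in H
  have key : ∀ z : ℤ_[p], z * a ∈ H := by
    have hC : IsClosed {z : ℤ_[p] | z * a ∈ H} :=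
      hH.preimage (continuous_id.mul continuous_const)
    intro z
    have hsub : Set.range ((↑) : ℕ → ℤ_[p]) ⊆ {z : ℤ_[p] | z * a ∈ H} := by
      rintro _ ⟨m, rfl⟩
      simpa [nsmul_eq_mul] using H.nsmul_mem haH m
    have hz : z ∈ closure (Set.range ((↑) : ℕ → ℤ_[p])) := by
      rw [PadicInt.denseRange_natCast.closure_range]; trivial
    have := closure_mono hsub hz
    rwa [hC.closure_eq] at this
  have hHeq : H = pPowSubgroup p n := by
    ext y
    rw [mem_pPowSubgroup_iff]
    constructor
    · intro hy
      by_cases hy0 : y = 0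
      · simp [hy0, zpow_nonneg (le_trans zero_le_one hp1)]
      · have hmem : y.valuation ∈ S :=
          ⟨y, hy, hy0, rfl⟩
        have hle : n ≤ y.valuation := Nat.sInf_le hmem
        have hle' : (n : ℤ) ≤ y.valuation := by
          exact_mod_cast hle
        rw [PadicInt.norm_eq_zpow_neg_valuation hy0]
        exact zpow_le_zpow_right₀ hp1 (by omega)
    · intro hy
      obtain ⟨z, hz⟩ : ((p : ℤ_[p]) ^ n) ∣ y := by
        rw [← Ideal.mem_span_singleton, ← PadicInt.norm_le_pow_iff_mem_span_pow]
        exact hy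
      set u := PadicInt.unitCoeff ha0 with hu
      have ha : a = (u : ℤ_[p]) * (p : ℤ_[p]) ^ n := by
        have := PadicInt.unitCoeff_spec ha0
        rw [this]
        congr 1
        rw [show a.valuation = n by exact_mod_cast hav]
      have : y = (z * (↑u⁻¹ : ℤ_[p])) * a := by
        rw [ha, hz, mul_assoc z, ← mul_assoc ((u⁻¹ : ℤ_[p]ˣ) : ℤ_[p]), Units.inv_mul,
          one_mul]
        ring
      rw [this]
      exact key _
  have hopen : IsOpen (H : Set ℤ_[p]) := by
    rw [hHeq]
    apply AddSubgroup.isOpen_of_mem_nhds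
    rw [Metric.mem_nhds_iff]
    refine ⟨(p : ℝ) ^ (-(n : ℤ)), by positivity, fun y hy => ?_⟩
    rw [SetLike.mem_coe, mem_pPowSubgroup_iff]
    rw [Metric.mem_ball, dist_zero_right] at hy
    exact hy.le
  exact ⟨Or.inr ⟨n, hHeq⟩, fun _ => hopen⟩
end

section
/- Let R be a commutative ring, M an R-module, and (e_k)_{k∈ℕ} a family of idempotents of R with e_i · e_j = 0 whenever i ≠ j. Let J ⊆ M be the submodule generated by ⋃_k e_k • M. Then the map φ : M → (M/J) × ∏_{k∈ℕ} (e_k • M) given by φ(m) = (m + J, (e_k • m)_k) is injective, and its image is exactly the set of pairs (x + J, (a_k)_k) such that a_k = e_k • x for all but finitely many k (this condition is independent of the chosen representative x, since e_k • y = 0 for all but finitely many k whenever y ∈ J). Hence M is the pullback of M/J and ∏_k e_k • M over (∏_k e_k • M)/(⨁_k e_k • M). -/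
open Pointwise

/-- Given a countable family of pairwise-orthogonal idempotents `e k` of a commutative
ring `R` and an `R`-module `M`, with `J` the submodule generated by `⋃ k, e k • M`, the
map `m ↦ (m + J, (e k • m)_k)` is injective and its image consists exactly of the pairs
`(x + J, (a k)_k)` with `a k = e k • x` for all but finitely many `k`.  Hence `M` is the
pullback of `M/J` and `∏ k, e k • M` over `(∏ k, e k • M)/(⨁ k, e k • M)`. -/
theorem module_pullback_of_orthogonal_idempotents
    (R : Type*) [CommRing R] (M : Type*) [AddCommGroup M] [Module R M]
    (e : ℕ → R) (hidem : ∀ k, IsIdempotentElem (e k))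
    (horth : ∀ i j : ℕ, i ≠ j → e i * e j = 0) :
    ∀ (J : Submodule R M),
      J = Submodule.span R (⋃ k : ℕ, ((e k • (⊤ : Submodule R M) : Submodule R M) : Set M)) →
    ∀ (φ : M → (M ⧸ J) × ((k : ℕ) → (e k • (⊤ : Submodule R M) : Submodule R M))),
      (∀ m : M, φ m = (Submodule.Quotient.mk m,
        fun k => ⟨e k • m, Submodule.smul_mem_pointwise_smul m (e k) ⊤ trivial⟩)) →
    Function.Injective φ ∧
      Set.range φ = {y | ∃ x : M, y.1 = Submodule.Quotient.mk x ∧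
        {k : ℕ | ((y.2 k : M)) ≠ e k • x}.Finite} := by
  classical
  intro J hJ φ hφ
  have hJ' : J = ⨆ k, (e k • ⊤ : Submodule R M) := by
    rw [hJ]
    apply le_antisymm
    · apply Submodule.span_le.mpr
      exact Set.iUnion_subset fun k =>
        SetLike.coe_subset_coe.mpr (le_iSup (fun k => (e k • (⊤ : Submodule R M))) k)
    · exact iSup_le fun k x hx => Submodule.subset_span (Set.mem_iUnion.mpr ⟨k, hx⟩)
  -- key fact: for a ∈ e k • ⊤, e j • a is a if j = k and 0 otherwise
  have key : ∀ (k : ℕ) (a : M), a ∈ (e k • (⊤ : Submodule R M)) →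
      ∀ j, e j • a = if j = k then a else 0 := by
    intro k a ha j
    obtain ⟨y, -, rfl⟩ := Set.mem_smul_set.mp ha
    by_cases h : j = k
    · subst h
      rw [if_pos rfl, smul_smul, hidem j]
    · rw [if_neg h, smul_smul, horth j k h, zero_smul]
  -- an element of J killed by each e k is zero
  have zeroJ : ∀ d ∈ J, (∀ k, e k • d = 0) → d = 0 := by
    intro d hd h0
    rw [hJ'] at hd
    obtain ⟨f, hf, hsum⟩ := (Submodule.mem_iSup_iff_exists_finsupp _ _).mp hd
    have hfk : ∀ k, f k = 0 := by
      intro k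
      have h1 : e k • d = ∑ i ∈ f.support, e k • f i := by
        rw [← hsum, Finsupp.sum, Finset.smul_sum]
      have h2 : ∀ i ∈ f.support, e k • f i = if k = i then f i else 0 := fun i _ =>
        key i (f i) (hf i) k
      rw [Finset.sum_congr rfl h2, Finset.sum_ite_eq] at h1
      by_cases hk : k ∈ f.support
      · rw [if_pos hk] at h1
        rw [← h1, h0]
      · exact Finsupp.notMem_support_iff.mp hk
    rw [← hsum, Finsupp.sum]
    exact Finset.sum_eq_zero fun i _ => hfk i
  constructor
  · -- injectivity
    intro m1 m2 h
    rw [hφ, hφ, Prod.mk.injEq] at h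
    obtain ⟨hq, hc⟩ := h
    have hmem : m1 - m2 ∈ J := (Submodule.Quotient.eq J).mp hq
    have hsm : ∀ k, e k • (m1 - m2) = 0 := by
      intro k
      have := congrFun hc k
      have h2 : e k • m1 = e k • m2 := congrArg Subtype.val this
      rw [smul_sub, h2, sub_self]
    exact sub_eq_zero.mp (zeroJ _ hmem hsm)
  · ext y
    constructor
    · rintro ⟨m, rfl⟩
      refine ⟨m, ?_, ?_⟩
      · rw [hφ]
      · rw [hφ]
        convert Set.finite_empty
        ext k
        simp
    · rintro ⟨x, h1, h2⟩
      set S := h2.toFinset with hS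
      set m := x + ∑ k ∈ S, ((y.2 k : M) - e k • x) with hm
      have hmemJ : ∀ k ∈ S, ((y.2 k : M) - e k • x) ∈ J := by
        intro k _
        have ha : (y.2 k : M) ∈ (e k • (⊤ : Submodule R M)) := (y.2 k).2
        have hb : e k • x ∈ (e k • (⊤ : Submodule R M)) :=
          Submodule.smul_mem_pointwise_smul x (e k) ⊤ trivial
        have : ((y.2 k : M) - e k • x) ∈ (e k • (⊤ : Submodule R M)) :=
          Submodule.sub_mem _ ha hb
        have hle : (e k • (⊤ : Submodule R M)) ≤ J := by
          rw [hJ']; exact le_iSup (fun k => (e k • (⊤ : Submodule R M))) k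
        exact hle this
      refine ⟨m, ?_⟩
      rw [hφ]
      have hek : ∀ k, e k • m = (y.2 k : M) := by
        intro k
        have hterm : ∀ j ∈ S, e k • ((y.2 j : M) - e j • x) =
            if k = j then ((y.2 j : M) - e j • x) else 0 := by
          intro j _
          have ha : (y.2 j : M) ∈ (e j • (⊤ : Submodule R M)) := (y.2 j).2
          have hb : e j • x ∈ (e j • (⊤ : Submodule R M)) :=
            Submodule.smul_mem_pointwise_smul x (e j) ⊤ trivial
          have := key j _ (Submodule.sub_mem _ ha hb) k
          exact this
        have : e k • m = e k • x + ∑ j ∈ S, e k • ((y.2 j : M) - e j • x) := by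
          rw [hm, smul_add, Finset.smul_sum]
        rw [Finset.sum_congr rfl hterm, Finset.sum_ite_eq] at this
        by_cases hk : k ∈ S
        · rw [if_pos hk] at this
          rw [this]; abel
        · rw [if_neg hk] at this
          have hkx : (y.2 k : M) = e k • x := by
            by_contra hne
            exact hk (h2.mem_toFinset.mpr hne)
          rw [this, add_zero, hkx]
      have hq : (Submodule.Quotient.mk m : M ⧸ J) = y.1 := by
        rw [h1]
        rw [Submodule.Quotient.eq]
        have : m - x = ∑ k ∈ S, ((y.2 k : M) - e k • x) := by rw [hm]; abel
        rw [this]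
        exact Submodule.sum_mem _ hmemJ
      refine Prod.ext hq ?_
      funext k
      exact Subtype.ext (hek k)
end

section
/- Let p be a prime and let M and N be ℚ-vector spaces with ℚ-linear ℤ_p-actions making them discrete ℤ_p-modules, and let f : M → N be an equivariant ℚ-linear map. Then f is surjective if and only if for every n ∈ ℕ the restriction of f to fixed points, f : M^{p^nℤ_p} → N^{p^nℤ_p}, is surjective, where M^{p^nℤ_p} = {m ∈ M : ρ_M(g)(m) = m for all g ∈ p^nℤ_p}. -/
lemma mem_pPowSubgroup {p : ℕ} [Fact p.Prime] {n : ℕ} {g : ℤ_[p]} :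
    g ∈ pPowSubgroup p n ↔ ∃ x, (p : ℤ_[p]) ^ n * x = g := by
  simp [pPowSubgroup, AddMonoidHom.mem_range]

lemma pPowSubgroup_antitone {p : ℕ} [Fact p.Prime] {m n : ℕ} (h : m ≤ n) :
    pPowSubgroup p n ≤ pPowSubgroup p m := by
  intro g hg
  obtain ⟨x, hx⟩ := mem_pPowSubgroup.mp hg
  refine mem_pPowSubgroup.mpr ⟨(p : ℤ_[p]) ^ (n - m) * x, ?_⟩
  rw [← hx, ← mul_assoc, ← pow_add]
  congr 2
  omega

lemma rho_add_apply {M : Type*} [AddCommGroup M] [Module ℚ M] {p : ℕ} [Fact p.Prime]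
    (ρ : Multiplicative ℤ_[p] →* (M ≃ₗ[ℚ] M)) (s t : ℤ_[p]) (m : M) :
    ρ (Multiplicative.ofAdd (s + t)) m
      = ρ (Multiplicative.ofAdd s) (ρ (Multiplicative.ofAdd t) m) := by
  rw [ofAdd_add, map_mul]
  rfl

lemma rho_congr {M : Type*} [AddCommGroup M] [Module ℚ M] {p : ℕ} [Fact p.Prime]
    (ρ : Multiplicative ℤ_[p] →* (M ≃ₗ[ℚ] M)) {x : M} {j : ℕ}
    (hx : ∀ g ∈ pPowSubgroup p j, ρ (Multiplicative.ofAdd g) x = x)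
    {a b : ℤ_[p]} (h : a - b ∈ pPowSubgroup p j) :
    ρ (Multiplicative.ofAdd a) x = ρ (Multiplicative.ofAdd b) x := by
  have ha : a = b + (a - b) := by ring
  rw [ha, rho_add_apply, hx _ h]

/-- An equivariant `ℚ`-linear map `f : M → N` of discrete rational `ℤ_p`-modules is
surjective if and only if for every `n` it is surjective on `p^n ℤ_p`-fixed points. -/
theorem surjective_iff_surjective_on_fixed_points (p : ℕ) [Fact p.Prime]
    (M N : Type*) [AddCommGroup M] [Module ℚ M] [AddCommGroup N] [Module ℚ N]
    (ρM : Multiplicative ℤ_[p] →* (M ≃ₗ[ℚ] M))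
    (ρN : Multiplicative ℤ_[p] →* (N ≃ₗ[ℚ] N))
    (hM : ∀ m : M, ∃ n : ℕ, ∀ g ∈ pPowSubgroup p n, ρM (Multiplicative.ofAdd g) m = m)
    (hN : ∀ x : N, ∃ n : ℕ, ∀ g ∈ pPowSubgroup p n, ρN (Multiplicative.ofAdd g) x = x)
    (f : M →ₗ[ℚ] N)
    (hf : ∀ (g : ℤ_[p]) (m : M),
      f (ρM (Multiplicative.ofAdd g) m) = ρN (Multiplicative.ofAdd g) (f m)) :
    Function.Surjective f ↔
      ∀ n : ℕ, ∀ y : N, (∀ g ∈ pPowSubgroup p n, ρN (Multiplicative.ofAdd g) y = y) →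
        ∃ x : M, (∀ g ∈ pPowSubgroup p n, ρM (Multiplicative.ofAdd g) x = x) ∧
          f x = y := by
  have hp : p.Prime := Fact.out
  constructor
  · intro hsurj n y hy
    obtain ⟨x', hx'⟩ := hsurj y
    obtain ⟨n', hfix'⟩ := hM x'
    set j : ℕ := max n n' with hj
    have hnj : n ≤ j := le_max_left _ _
    set e : ℕ := j - n with he
    have hje : j = n + e := by omega
    set K : ℕ := p ^ e with hK
    haveI : NeZero K := ⟨pow_ne_zero _ hp.ne_zero⟩
    have hKpos : 0 < K := Nat.pos_of_ne_zero (NeZero.ne K)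
    have hfix : ∀ g ∈ pPowSubgroup p j, ρM (Multiplicative.ofAdd g) x' = x' := fun g hg =>
      hfix' g (pPowSubgroup_antitone (le_max_right _ _) hg)
    -- The averaging function indexed by `ZMod K`
    set F : ZMod K → M := fun c =>
      ρM (Multiplicative.ofAdd ((p : ℤ_[p]) ^ n * (c.val : ℤ_[p]))) x' with hF
    have keyA : ∀ a : ℤ_[p],
        ρM (Multiplicative.ofAdd ((p : ℤ_[p]) ^ n * a)) x' = F (PadicInt.toZModPow e a) := by
      intro a
      apply rho_congr ρM hfix
      have hker : a - (((PadicInt.toZModPow e a).val : ℕ) : ℤ_[p])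
          ∈ RingHom.ker (PadicInt.toZModPow (p := p) e) := by
        rw [RingHom.mem_ker, map_sub, map_natCast, ZMod.natCast_val, ZMod.cast_id, sub_self]
      rw [PadicInt.ker_toZModPow, Ideal.mem_span_singleton] at hker
      obtain ⟨z, hz⟩ := hker
      refine mem_pPowSubgroup.mpr ⟨z, ?_⟩
      rw [hje, pow_add, mul_assoc, ← hz]
      ring
    -- sums over range K reindexed as sums over ZMod K
    have hsum : ∀ G : ZMod K → M,
        ∑ k ∈ Finset.range K, G ((k : ZMod K)) = ∑ c : ZMod K, G c := by
      intro G
      refine Finset.sum_nbij' (fun k => (k : ZMod K)) (fun c => c.val) ?_ ?_ ?_ ?_ ?_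
      · intro k _; exact Finset.mem_univ _
      · intro c _; exact Finset.mem_range.mpr (ZMod.val_lt c)
      · intro k hk; exact ZMod.val_natCast_of_lt (Finset.mem_range.mp hk)
      · intro c _; simp [ZMod.natCast_val, ZMod.cast_id]
      · intro k _; rfl
    set S : M := ∑ k ∈ Finset.range K, ρM (Multiplicative.ofAdd ((p : ℤ_[p]) ^ n * (k : ℤ_[p]))) x'
      with hS
    have hS_eq : S = ∑ c : ZMod K, F c := by
      rw [hS]
      rw [← hsum F]
      refine Finset.sum_congr rfl fun k _ => ?_
      rw [keyA, map_natCast]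
    set x : M := (K : ℚ)⁻¹ • S with hxdef
    refine ⟨x, ?_, ?_⟩
    · -- fixedness
      intro g hg
      obtain ⟨u, hu⟩ := mem_pPowSubgroup.mp hg
      have : ρM (Multiplicative.ofAdd g) S = S := by
        rw [hS, map_sum]
        have step : ∀ k : ℕ,
            ρM (Multiplicative.ofAdd g)
              (ρM (Multiplicative.ofAdd ((p : ℤ_[p]) ^ n * (k : ℤ_[p]))) x')
            = F (PadicInt.toZModPow e u + (k : ZMod K)) := by
          intro k
          rw [← rho_add_apply, ← hu, ← mul_add, keyA, map_add, map_natCast]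
        calc (∑ k ∈ Finset.range K, ρM (Multiplicative.ofAdd g)
                (ρM (Multiplicative.ofAdd ((p : ℤ_[p]) ^ n * (k : ℤ_[p]))) x'))
            = ∑ k ∈ Finset.range K, F (PadicInt.toZModPow e u + (k : ZMod K)) :=
              Finset.sum_congr rfl fun k _ => step k
          _ = ∑ c : ZMod K, F (PadicInt.toZModPow e u + c) :=
              hsum (fun c => F (PadicInt.toZModPow e u + c))
          _ = ∑ c : ZMod K, F c :=
              Fintype.sum_equiv (Equiv.addLeft (PadicInt.toZModPow e u)) _ _ (fun c => rfl)
          _ = S := hS_eq.symm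
      rw [hxdef, map_smul, this]
    · -- f x = y
      have hfS : f S = (K : ℚ) • y := by
        rw [hS, map_sum]
        have : ∀ k ∈ Finset.range K,
            f (ρM (Multiplicative.ofAdd ((p : ℤ_[p]) ^ n * (k : ℤ_[p]))) x') = y := by
          intro k _
          rw [hf, hx']
          exact hy _ (mem_pPowSubgroup.mpr ⟨(k : ℤ_[p]), rfl⟩)
        rw [Finset.sum_congr rfl this, Finset.sum_const, Finset.card_range,
          ← Nat.cast_smul_eq_nsmul ℚ]
      rw [hxdef, map_smul, hfS, smul_smul, inv_mul_cancel₀ (by exact_mod_cast hKpos.ne'),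
        one_smul]
  · intro h y
    obtain ⟨n, hn⟩ := hN y
    obtain ⟨x, _, hx⟩ := h n y hn
    exact ⟨x, hx⟩
end

section
/- Let p be a prime and m, n natural numbers. Give the group algebra ℚ[ZMod (p^m)] the action of the additive group ℤ_p in which g ∈ ℤ_p acts by left multiplication by the image of g under the projection ℤ_p → ZMod (p^m), and similarly for ℚ[ZMod (p^n)]. Then the ℚ-vector space of ℤ_p-equivariant ℚ-linear maps from ℚ[ZMod (p^m)] to ℚ[ZMod (p^n)] is isomorphic, as a ℚ-vector space, to ℚ[ZMod (p^{min(m,n)})]; in particular it has dimension p^{min(m,n)}. -/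
open MonoidAlgebra Multiplicative PadicInt

namespace EquivariantHomsAux

variable (p : ℕ) [hp : Fact p.Prime]

instance (k : ℕ) : NeZero (p ^ k) := ⟨pow_ne_zero _ hp.out.ne_zero⟩

/-- the submodule of equivariant maps -/
noncomputable def E (m n : ℕ) : Submodule ℚ ((MonoidAlgebra ℚ (Multiplicative (ZMod (p ^ m)))) →ₗ[ℚ]
    (MonoidAlgebra ℚ (Multiplicative (ZMod (p ^ n))))) where
  carrier := {f | ∀ (g : ℤ_[p]) (x : MonoidAlgebra ℚ (Multiplicative (ZMod (p ^ m)))),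
          f ((MonoidAlgebra.of ℚ (Multiplicative (ZMod (p ^ m)))
                (Multiplicative.ofAdd (PadicInt.toZModPow m g))) * x)
            = (MonoidAlgebra.of ℚ (Multiplicative (ZMod (p ^ n)))
                (Multiplicative.ofAdd (PadicInt.toZModPow n g))) * f x}
  add_mem' := by
    intro f g hf hg a x
    simp only [LinearMap.add_apply, hf a x, hg a x, mul_add]
  zero_mem' := by
    intro a x; simp
  smul_mem' := by
    intro c f hf a x
    simp only [LinearMap.smul_apply, hf a x, mul_smul_comm]

/-- the "constant on fibers" submodule -/
noncomputable def S (k n : ℕ) (h : k ≤ n) :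
    Submodule ℚ (MonoidAlgebra ℚ (Multiplicative (ZMod (p ^ n)))) where
  carrier := {v | ∀ b b' : Multiplicative (ZMod (p ^ n)),
      ZMod.castHom (pow_dvd_pow p h) (ZMod (p ^ k)) b.toAdd
        = ZMod.castHom (pow_dvd_pow p h) (ZMod (p ^ k)) b'.toAdd →
      v.coeff b = v.coeff b'}
  add_mem' := by
    intro u v hu hv b b' hb
    show u.coeff b + v.coeff b = u.coeff b' + v.coeff b'
    rw [hu b b' hb, hv b b' hb]
  zero_mem' := by intro b b' hb; rfl
  smul_mem' := by
    intro c v hv b b' hb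
    show c • v.coeff b = c • v.coeff b'
    rw [hv b b' hb]

theorem valcast (k n : ℕ) (h : k ≤ n) (x : ZMod (p ^ n)) :
    ((x.val : ℕ) : ZMod (p ^ k)) = ZMod.castHom (pow_dvd_pow p h) (ZMod (p ^ k)) x := by
  rw [ZMod.castHom_apply, ZMod.natCast_val]

theorem cast_pi (k n : ℕ) (h : k ≤ n) (g : ℤ_[p]) :
    ZMod.castHom (pow_dvd_pow p h) (ZMod (p ^ k)) (toZModPow n g) = toZModPow k g := by
  rw [← zmod_cast_comp_toZModPow k n h]; rfl

theorem key (k n : ℕ) (h : k ≤ n) (v : MonoidAlgebra ℚ (Multiplicative (ZMod (p ^ n))))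
    (hv : v ∈ S p k n h) (c c' : ZMod (p ^ n))
    (hcc : ZMod.castHom (pow_dvd_pow p h) (ZMod (p ^ k)) c
      = ZMod.castHom (pow_dvd_pow p h) (ZMod (p ^ k)) c') :
    single (Multiplicative.ofAdd c) (1 : ℚ) * v = single (Multiplicative.ofAdd c') 1 * v := by
  apply MonoidAlgebra.ext
  apply Finsupp.ext
  intro b
  rw [MonoidAlgebra.single_mul_apply, MonoidAlgebra.single_mul_apply, one_mul, one_mul]
  apply hv
  simp only [toAdd_mul, toAdd_inv, toAdd_ofAdd, map_add, map_neg, hcc]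

theorem apply_one_mem_S (k m n : ℕ) (hkn : k ≤ n) (hmin : k = m ∨ k = n)
    (f : (MonoidAlgebra ℚ (Multiplicative (ZMod (p ^ m)))) →ₗ[ℚ]
        (MonoidAlgebra ℚ (Multiplicative (ZMod (p ^ n)))))
    (hf : f ∈ E p m n) : f 1 ∈ S p k n hkn := by
  intro b b' hb
  rcases hmin with hm | hn
  · -- k = m
    subst hm
    set c : ZMod (p ^ n) := b.toAdd - b'.toAdd with hc
    have hg1 : toZModPow n ((c.val : ℕ) : ℤ_[p]) = c := by
      rw [map_natCast, ZMod.natCast_zmod_val]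
    have hg2 : toZModPow k ((c.val : ℕ) : ℤ_[p]) = 0 := by
      rw [map_natCast, valcast p k n hkn, hc, map_sub, hb, sub_self]
    have := hf ((c.val : ℕ) : ℤ_[p]) 1
    rw [hg1, hg2, ofAdd_zero, map_one, one_mul] at this
    -- this : f 1 = of _ _ (ofAdd c) * f 1
    have hb2 : (f 1).coeff b = (MonoidAlgebra.of ℚ (Multiplicative (ZMod (p ^ n)))
        (Multiplicative.ofAdd c) * f 1).coeff b := by rw [← this]
    rw [MonoidAlgebra.of_apply, MonoidAlgebra.single_mul_apply, one_mul] at hb2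
    have harg : (Multiplicative.ofAdd c)⁻¹ * b = b' := by
      apply Multiplicative.toAdd.injective
      simp [hc]
    rw [harg] at hb2
    exact hb2
  · -- k = n : cast is essentially identity
    subst hn
    have : b = b' := by
      have := hb
      rw [ZMod.castHom_apply, ZMod.castHom_apply, ZMod.cast_id, ZMod.cast_id] at this
      exact toAdd.injective this
    rw [this]

theorem exists_preimage (k m n : ℕ) (hkm : k ≤ m) (hkn : k ≤ n)
    (v : MonoidAlgebra ℚ (Multiplicative (ZMod (p ^ n)))) (hv : v ∈ S p k n hkn) :
    ∃ f ∈ E p m n, f 1 = v := by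
  set F : Multiplicative (ZMod (p ^ m)) → MonoidAlgebra ℚ (Multiplicative (ZMod (p ^ n))) :=
    fun a => single (Multiplicative.ofAdd ((a.toAdd.val : ℕ) : ZMod (p ^ n))) 1 * v with hF
  set f : (MonoidAlgebra ℚ (Multiplicative (ZMod (p ^ m)))) →ₗ[ℚ]
      (MonoidAlgebra ℚ (Multiplicative (ZMod (p ^ n)))) :=
    (Finsupp.lift _ ℚ _ F).comp (MonoidAlgebra.coeffLinearEquiv ℚ).toLinearMap with hf
  have hsingle : ∀ (a : Multiplicative (ZMod (p ^ m))) (r : ℚ),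
      f (single a r) = r • F a := by
    intro a r
    rw [hf]
    exact Finsupp.sum_single_index (zero_smul ℚ (F a))
  refine ⟨f, ?_, ?_⟩
  · intro g x
    induction x using MonoidAlgebra.induction_linear with
    | zero => rw [mul_zero, map_zero, mul_zero]
    | add x y hx hy =>
        rw [mul_add, map_add, hx, hy, map_add, mul_add]
    | single a r =>
        have hl : (MonoidAlgebra.of ℚ (Multiplicative (ZMod (p ^ m)))
            (Multiplicative.ofAdd (toZModPow m g))) * single a r
            = single (Multiplicative.ofAdd (toZModPow m g) * a) r := by
          rw [MonoidAlgebra.of_apply, MonoidAlgebra.single_mul_single, one_mul]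
        rw [hl, hsingle, hsingle, hF]
        simp only
        rw [mul_smul_comm]
        congr 1
        rw [MonoidAlgebra.of_apply, ← mul_assoc, MonoidAlgebra.single_mul_single, one_mul]
        have := key p k n hkn v hv
          ((((Multiplicative.ofAdd (toZModPow m g) * a).toAdd).val : ℕ) : ZMod (p ^ n))
          (toZModPow n g + ((a.toAdd.val : ℕ) : ZMod (p ^ n))) ?_
        · rw [this]
          congr 1
        · have hy : (toAdd (Multiplicative.ofAdd (toZModPow m g) * a))
              = toZModPow m g + toAdd a := by simp
          simp only [hy, map_natCast, map_add, valcast p k m hkm,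
            cast_pi p k n hkn, cast_pi p k m hkm]
  · rw [MonoidAlgebra.one_def, hsingle, one_smul, hF]
    simp only [toAdd_one, ZMod.val_zero, Nat.cast_zero, ofAdd_zero, ← MonoidAlgebra.one_def,
      one_mul]

theorem eq_zero_of_apply_one (m n : ℕ)
    (f : (MonoidAlgebra ℚ (Multiplicative (ZMod (p ^ m)))) →ₗ[ℚ]
        (MonoidAlgebra ℚ (Multiplicative (ZMod (p ^ n)))))
    (hf : f ∈ E p m n) (h1 : f 1 = 0) : f = 0 := by
  apply LinearMap.ext
  intro x
  rw [LinearMap.zero_apply]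
  induction x using MonoidAlgebra.induction_linear with
  | zero => simp
  | add x y hx hy => rw [map_add, hx, hy, add_zero]
  | single a r =>
      have hg : toZModPow m ((a.toAdd.val : ℕ) : ℤ_[p]) = a.toAdd := by
        rw [map_natCast, ZMod.natCast_zmod_val]
      have := hf ((a.toAdd.val : ℕ) : ℤ_[p]) 1
      rw [hg, h1, mul_zero, mul_one, ofAdd_toAdd] at this
      have hr : (single a r : MonoidAlgebra ℚ (Multiplicative (ZMod (p ^ m))))
          = r • (MonoidAlgebra.of ℚ (Multiplicative (ZMod (p ^ m))) a) := by
        rw [MonoidAlgebra.of_apply, MonoidAlgebra.smul_single, smul_eq_mul, mul_one]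
      simp only [hr, map_smul, this, smul_zero]

noncomputable def eqv2 (k n : ℕ) (h : k ≤ n) :
    (S p k n h) ≃ₗ[ℚ] (Multiplicative (ZMod (p ^ k)) →₀ ℚ) where
  toFun v := Finsupp.equivFunOnFinite.symm
    (fun a => (v : MonoidAlgebra ℚ (Multiplicative (ZMod (p ^ n)))).coeff
      (Multiplicative.ofAdd ((a.toAdd.val : ℕ) : ZMod (p ^ n))))
  map_add' u v := by
    apply Finsupp.ext
    intro a
    rfl
  map_smul' c v := by
    apply Finsupp.ext
    intro a
    rfl
  invFun w := ⟨MonoidAlgebra.ofCoeff <| Finsupp.equivFunOnFinite.symm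
      (fun b => w (Multiplicative.ofAdd ((b.toAdd.val : ℕ) : ZMod (p ^ k)))), by
    intro b b' hb
    simp only [MonoidAlgebra.coeff_ofCoeff, Finsupp.equivFunOnFinite_symm_apply_apply]
    rw [valcast p k n h, valcast p k n h, hb]⟩
  left_inv v := by
    apply Subtype.ext
    apply MonoidAlgebra.ext
    apply Finsupp.ext
    intro b
    simp only [MonoidAlgebra.coeff_ofCoeff, Finsupp.equivFunOnFinite_symm_apply_apply]
    apply v.2
    simp only [toAdd_ofAdd]
    rw [valcast p k n h, map_natCast, ZMod.natCast_zmod_val]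
  right_inv w := by
    apply Finsupp.ext
    intro a
    simp only [MonoidAlgebra.coeff_ofCoeff, Finsupp.equivFunOnFinite_symm_apply_apply]
    congr 1
    simp only [toAdd_ofAdd]
    rw [valcast p k n h, map_natCast, ZMod.natCast_zmod_val, ofAdd_toAdd]

end EquivariantHomsAux

open EquivariantHomsAux in
/-- Let `ℤ_p` act on the group algebra `ℚ[ZMod (p^k)]` by left multiplication through
the projection `ℤ_p → ZMod (p^k)`.  The `ℚ`-vector space of `ℤ_p`-equivariant
`ℚ`-linear maps `ℚ[ZMod (p^m)] → ℚ[ZMod (p^n)]` is isomorphic to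
`ℚ[ZMod (p^(min m n))]`; in particular it has dimension `p^(min m n)`. -/
theorem equivariant_homs_iso (p m n : ℕ) [Fact p.Prime] :
    ∃ E : Submodule ℚ ((MonoidAlgebra ℚ (Multiplicative (ZMod (p ^ m)))) →ₗ[ℚ]
            (MonoidAlgebra ℚ (Multiplicative (ZMod (p ^ n))))),
      (E : Set ((MonoidAlgebra ℚ (Multiplicative (ZMod (p ^ m)))) →ₗ[ℚ]
            (MonoidAlgebra ℚ (Multiplicative (ZMod (p ^ n)))))) =
        {f : (MonoidAlgebra ℚ (Multiplicative (ZMod (p ^ m)))) →ₗ[ℚ]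
            (MonoidAlgebra ℚ (Multiplicative (ZMod (p ^ n)))) |
          ∀ (g : ℤ_[p]) (x : MonoidAlgebra ℚ (Multiplicative (ZMod (p ^ m)))),
          f ((MonoidAlgebra.of ℚ (Multiplicative (ZMod (p ^ m)))
                (Multiplicative.ofAdd (PadicInt.toZModPow m g))) * x)
            = (MonoidAlgebra.of ℚ (Multiplicative (ZMod (p ^ n)))
                (Multiplicative.ofAdd (PadicInt.toZModPow n g))) * f x} ∧
      Nonempty (E ≃ₗ[ℚ] MonoidAlgebra ℚ (Multiplicative (ZMod (p ^ (min m n))))) ∧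
      Module.finrank ℚ E = p ^ (min m n) := by
  classical
  set k := min m n with hk
  have hkm : k ≤ m := min_le_left m n
  have hkn : k ≤ n := min_le_right m n
  have hmin : k = m ∨ k = n := by
    rcases le_total m n with h | h
    · exact Or.inl (min_eq_left h)
    · exact Or.inr (min_eq_right h)
  refine ⟨E p m n, rfl, ?_⟩
  -- the evaluation map E → S
  let Φ : (E p m n) →ₗ[ℚ] (S p k n hkn) :=
    LinearMap.codRestrict _ ((LinearMap.applyₗ (1 : MonoidAlgebra ℚ
      (Multiplicative (ZMod (p ^ m))))).comp (E p m n).subtype)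
      (fun f => apply_one_mem_S p k m n hkn hmin f.1 f.2)
  have hbij : Function.Bijective Φ := by
    constructor
    · intro f g hfg
      apply Subtype.ext
      have h0 : (f.1 - g.1) 1 = 0 := by
        have : f.1 1 = g.1 1 := congrArg Subtype.val hfg
        simp [LinearMap.sub_apply, this]
      have := eq_zero_of_apply_one p m n (f.1 - g.1) (sub_mem f.2 g.2) h0
      exact sub_eq_zero.mp this
    · rintro ⟨v, hv⟩
      obtain ⟨f, hfE, hf1⟩ := exists_preimage p k m n hkm hkn v hv
      exact ⟨⟨f, hfE⟩, Subtype.ext hf1⟩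
  let e : (E p m n) ≃ₗ[ℚ] (Multiplicative (ZMod (p ^ k)) →₀ ℚ) :=
    (LinearEquiv.ofBijective Φ hbij).trans (eqv2 p k n hkn)
  constructor
  · exact ⟨e.trans (MonoidAlgebra.coeffLinearEquiv ℚ).symm⟩
  · rw [LinearEquiv.finrank_eq e,
      Module.finrank_eq_card_basis (Finsupp.basisSingleOne :
        Module.Basis (Multiplicative (ZMod (p ^ k))) ℚ _)]
    simp [ZMod.card, Fintype.card_multiplicative]
end
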